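/- Frobenius error of a best rank-k approximation against a rank-k target: let L, M be n×n real matrices with rank(M) ≤ k, and let L_k be any n×n real matrix of rank at most k that minimizes X ↦ ‖L − X‖_op over all matrices X of rank at most k (a best rank-k approximation of L in operator norm). Then ‖L_k − M‖_F² ≤ 8k·‖L − M‖_op². -/

import Mathlib

open scoped BigOperators
open scoped Matrix

noncomputable section

/-- The operator norm of a real matrix induced by the Euclidean norms:
the supremum of `‖X v‖₂` over Euclidean unit vectors `v`. -/
def opNorm {m n : ℕ} (X : Matrix (Fin m) (Fin n) ℝ) : ℝ :=
  sSup { r : ℝ | ∃ v : Fin n → ℝ, (∑ j, v j ^ 2) = 1 ∧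
    r = Real.sqrt (∑ i, (X.mulVec v i) ^ 2) }

namespace AuxBRK

variable {n : ℕ}

lemma sum_sq_mulVec_le_frob (X : Matrix (Fin n) (Fin n) ℝ) {v : Fin n → ℝ}
    (hv : (∑ j, v j ^ 2) = 1) :
    (∑ i, (X.mulVec v i) ^ 2) ≤ ∑ i, ∑ j, X i j ^ 2 := by
  apply Finset.sum_le_sum
  intro i _
  have := Finset.sum_mul_sq_le_sq_mul_sq Finset.univ (fun j => X i j) v
  calc (X.mulVec v i) ^ 2 = (∑ j, X i j * v j) ^ 2 := by
        simp [Matrix.mulVec, dotProduct]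
    _ ≤ (∑ j, X i j ^ 2) * (∑ j, v j ^ 2) := this
    _ = ∑ j, X i j ^ 2 := by rw [hv, mul_one]

lemma bddAbove_set (X : Matrix (Fin n) (Fin n) ℝ) :
    BddAbove { r : ℝ | ∃ v : Fin n → ℝ, (∑ j, v j ^ 2) = 1 ∧
      r = Real.sqrt (∑ i, (X.mulVec v i) ^ 2) } := by
  refine ⟨Real.sqrt (∑ i, ∑ j, X i j ^ 2), ?_⟩
  rintro r ⟨v, hv, rfl⟩
  exact Real.sqrt_le_sqrt (sum_sq_mulVec_le_frob X hv)

lemma opNorm_nonneg (X : Matrix (Fin n) (Fin n) ℝ) : 0 ≤ opNorm X := by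
  apply Real.sSup_nonneg
  rintro r ⟨v, hv, rfl⟩
  exact Real.sqrt_nonneg _

lemma sqrt_le_opNorm (X : Matrix (Fin n) (Fin n) ℝ) {v : Fin n → ℝ}
    (hv : (∑ j, v j ^ 2) = 1) :
    Real.sqrt (∑ i, (X.mulVec v i) ^ 2) ≤ opNorm X :=
  le_csSup (bddAbove_set X) ⟨v, hv, rfl⟩

lemma sum_sq_le_opNorm_sq (X : Matrix (Fin n) (Fin n) ℝ) {v : Fin n → ℝ}
    (hv : (∑ j, v j ^ 2) = 1) :
    (∑ i, (X.mulVec v i) ^ 2) ≤ opNorm X ^ 2 := by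
  have h0 : (0:ℝ) ≤ ∑ i, (X.mulVec v i) ^ 2 :=
    Finset.sum_nonneg fun i _ => sq_nonneg _
  have := sqrt_le_opNorm X hv
  calc (∑ i, (X.mulVec v i) ^ 2) = Real.sqrt (∑ i, (X.mulVec v i) ^ 2) ^ 2 :=
        (Real.sq_sqrt h0).symm
    _ ≤ opNorm X ^ 2 := by
        apply pow_le_pow_left₀ (Real.sqrt_nonneg _) this

lemma sqrt_sum_sq_add_le (a b : Fin n → ℝ) :
    Real.sqrt (∑ i, (a i + b i) ^ 2) ≤
      Real.sqrt (∑ i, a i ^ 2) + Real.sqrt (∑ i, b i ^ 2) := by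
  have key : ∀ x : Fin n → ℝ,
      ‖(WithLp.equiv 2 (Fin n → ℝ)).symm x‖ = Real.sqrt (∑ i, x i ^ 2) := by
    intro x
    rw [EuclideanSpace.norm_eq]
    congr 1
    apply Finset.sum_congr rfl
    intro i _
    simp [Real.norm_eq_abs, sq_abs]
  have h := norm_add_le ((WithLp.equiv 2 (Fin n → ℝ)).symm a)
    ((WithLp.equiv 2 (Fin n → ℝ)).symm b)
  rw [key a, key b] at h
  have : (WithLp.equiv 2 (Fin n → ℝ)).symm a + (WithLp.equiv 2 (Fin n → ℝ)).symm b
      = (WithLp.equiv 2 (Fin n → ℝ)).symm (a + b) := by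
    ext i; simp
  rw [this, key (a + b)] at h
  exact h

lemma opNorm_sub_le (A B : Matrix (Fin n) (Fin n) ℝ) :
    opNorm (A - B) ≤ opNorm A + opNorm B := by
  apply Real.sSup_le
  · rintro r ⟨v, hv, rfl⟩
    have hsub : ∀ i, (A - B).mulVec v i = A.mulVec v i + (-(B.mulVec v)) i := by
      intro i
      rw [Matrix.sub_mulVec]; simp [sub_eq_add_neg]
    have h1 : Real.sqrt (∑ i, ((A - B).mulVec v i) ^ 2) ≤
        Real.sqrt (∑ i, (A.mulVec v i) ^ 2) + Real.sqrt (∑ i, ((-(B.mulVec v)) i) ^ 2) := by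
      have := sqrt_sum_sq_add_le (A.mulVec v) (-(B.mulVec v))
      calc Real.sqrt (∑ i, ((A - B).mulVec v i) ^ 2)
          = Real.sqrt (∑ i, (A.mulVec v i + (-(B.mulVec v)) i) ^ 2) := by
            congr 1; exact Finset.sum_congr rfl fun i _ => by rw [hsub i]
        _ ≤ _ := this
    have h2 : (∑ i, ((-(B.mulVec v)) i) ^ 2) = ∑ i, (B.mulVec v i) ^ 2 := by
      apply Finset.sum_congr rfl; intro i _; simp
    rw [h2] at h1
    exact h1.trans (add_le_add (sqrt_le_opNorm A hv) (sqrt_le_opNorm B hv))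
  · exact add_nonneg (opNorm_nonneg A) (opNorm_nonneg B)

lemma rank_sub_le (A B : Matrix (Fin n) (Fin n) ℝ) :
    (A - B).rank ≤ A.rank + B.rank := by
  rw [Matrix.rank, Matrix.rank, Matrix.rank]
  have hle : LinearMap.range (A - B).mulVecLin ≤
      LinearMap.range A.mulVecLin ⊔ LinearMap.range B.mulVecLin := by
    rintro x ⟨v, rfl⟩
    have : (A - B).mulVecLin v = A.mulVecLin v - B.mulVecLin v := by
      simp [Matrix.mulVecLin, Matrix.sub_mulVec]
    rw [this]
    exact sub_mem (Submodule.mem_sup_left ⟨v, rfl⟩) (Submodule.mem_sup_right ⟨v, rfl⟩)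
  calc Module.finrank ℝ (LinearMap.range (A - B).mulVecLin)
      ≤ Module.finrank ℝ ↥(LinearMap.range A.mulVecLin ⊔ LinearMap.range B.mulVecLin) :=
        Submodule.finrank_mono hle
    _ ≤ _ := by
        have := Submodule.finrank_add_le_finrank_add_finrank
          (LinearMap.range A.mulVecLin) (LinearMap.range B.mulVecLin)
        omega

end AuxBRK

/-- **Frobenius error of a best rank-`k` approximation against a rank-`k` target**:
if `rank M ≤ k` and `Lk` minimizes `X ↦ ‖L - X‖_op` over matrices of rank at most `k`,
then `‖Lk - M‖_F² ≤ 8 k ‖L - M‖_op²`. -/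
theorem best_rank_k_approx_frobenius_bound
    {n k : ℕ} (L M Lk : Matrix (Fin n) (Fin n) ℝ)
    (hM : M.rank ≤ k) (hLk : Lk.rank ≤ k)
    (hmin : ∀ X : Matrix (Fin n) (Fin n) ℝ, X.rank ≤ k →
      opNorm (L - Lk) ≤ opNorm (L - X)) :
    (∑ i, ∑ j, (Lk - M) i j ^ 2) ≤ 8 * (k : ℝ) * opNorm (L - M) ^ 2 := by
  set D := Lk - M with hD
  set A := Dᵀ * D with hAdef
  have hA : A.IsHermitian := by
    have := Matrix.isHermitian_conjTranspose_mul_self D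
    rwa [Matrix.conjTranspose_eq_transpose_of_trivial] at this
  -- trace identity
  have htr1 : (∑ i, ∑ j, D i j ^ 2) = A.trace := by
    rw [Matrix.trace]
    simp only [Matrix.diag, hAdef, Matrix.mul_apply, Matrix.transpose_apply]
    rw [Finset.sum_comm]
    apply Finset.sum_congr rfl; intro i _
    apply Finset.sum_congr rfl; intro j _
    ring
  have htr2 : A.trace = ∑ i, hA.eigenvalues i := by
    rw [hA.trace_eq_sum_eigenvalues]
    simp
  -- each eigenvalue is bounded by opNorm D ^ 2
  have heig : ∀ i, hA.eigenvalues i ≤ opNorm D ^ 2 := by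
    intro i
    set v : Fin n → ℝ := ⇑(hA.eigenvectorBasis i) with hvdef
    have hnorm : ‖hA.eigenvectorBasis i‖ = 1 := hA.eigenvectorBasis.orthonormal.1 i
    have hunit : (∑ j, v j ^ 2) = 1 := by
      have := EuclideanSpace.norm_eq (hA.eigenvectorBasis i)
      rw [hnorm] at this
      have h0 : (0:ℝ) ≤ ∑ j, v j ^ 2 := Finset.sum_nonneg fun j _ => sq_nonneg _
      have : (1:ℝ) = Real.sqrt (∑ j, v j ^ 2) := by
        rw [this]; congr 1
        exact Finset.sum_congr rfl fun j _ => by simp [Real.norm_eq_abs, sq_abs, hvdef]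
      nlinarith [Real.sq_sqrt h0]
    have hev : A *ᵥ v = hA.eigenvalues i • v := hA.mulVec_eigenvectorBasis i
    have key : (∑ j, (D.mulVec v j) ^ 2) = hA.eigenvalues i := by
      have e1 : (∑ j, (D.mulVec v j) ^ 2) = (D *ᵥ v) ⬝ᵥ (D *ᵥ v) := by
        simp [dotProduct, sq]
      have e2 : (D *ᵥ v) ⬝ᵥ (D *ᵥ v) = v ⬝ᵥ (A *ᵥ v) := by
        rw [hAdef, ← Matrix.mulVec_mulVec, Matrix.dotProduct_mulVec v Dᵀ,
          Matrix.vecMul_transpose]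
      rw [e1, e2, hev]
      simp only [dotProduct, Pi.smul_apply, smul_eq_mul]
      calc (∑ j, v j * (hA.eigenvalues i * v j))
          = hA.eigenvalues i * ∑ j, v j ^ 2 := by rw [Finset.mul_sum]; congr 1; funext j; ring
        _ = hA.eigenvalues i := by rw [hunit, mul_one]
    rw [← key]
    exact AuxBRK.sum_sq_le_opNorm_sq D hunit
  -- rank bound
  have hrank : D.rank ≤ 2 * k := by
    calc D.rank ≤ Lk.rank + M.rank := AuxBRK.rank_sub_le Lk M
      _ ≤ 2 * k := by omega
  have hcard : Fintype.card {i // hA.eigenvalues i ≠ 0} = D.rank := by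
    rw [← hA.rank_eq_card_non_zero_eigs, hAdef, Matrix.rank_transpose_mul_self]
  -- sum of eigenvalues bound
  have hDop : (0:ℝ) ≤ opNorm D ^ 2 := sq_nonneg _
  have hsum : (∑ i, hA.eigenvalues i) ≤ (D.rank : ℝ) * opNorm D ^ 2 := by
    classical
    have : (∑ i, hA.eigenvalues i)
        = ∑ i ∈ Finset.univ.filter (fun i => hA.eigenvalues i ≠ 0), hA.eigenvalues i := by
      rw [Finset.sum_filter_ne_zero]
    rw [this]
    have hb : ∀ i ∈ Finset.univ.filter (fun i => hA.eigenvalues i ≠ 0),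
        hA.eigenvalues i ≤ opNorm D ^ 2 := fun i _ => heig i
    calc (∑ i ∈ Finset.univ.filter (fun i => hA.eigenvalues i ≠ 0), hA.eigenvalues i)
        ≤ (Finset.univ.filter (fun i => hA.eigenvalues i ≠ 0)).card • (opNorm D ^ 2) :=
          Finset.sum_le_card_nsmul _ _ _ hb
      _ = ((Finset.univ.filter (fun i => hA.eigenvalues i ≠ 0)).card : ℝ) * opNorm D ^ 2 := by
          rw [nsmul_eq_mul]
      _ = (D.rank : ℝ) * opNorm D ^ 2 := by
          rw [← hcard, Fintype.card_subtype]
  -- operator norm bound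
  have h1 : opNorm (L - Lk) ≤ opNorm (L - M) := hmin M hM
  have h2 : opNorm D ≤ 2 * opNorm (L - M) := by
    have : D = (L - M) - (L - Lk) := by rw [hD]; abel
    calc opNorm D ≤ opNorm (L - M) + opNorm (L - Lk) := by
          rw [this]; exact AuxBRK.opNorm_sub_le _ _
      _ ≤ 2 * opNorm (L - M) := by linarith
  have h3 : opNorm D ^ 2 ≤ 4 * opNorm (L - M) ^ 2 := by
    nlinarith [AuxBRK.opNorm_nonneg D, AuxBRK.opNorm_nonneg (L - M)]
  -- assemble
  have hrankR : (D.rank : ℝ) ≤ 2 * k := by exact_mod_cast hrank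
  calc (∑ i, ∑ j, D i j ^ 2) = ∑ i, hA.eigenvalues i := by rw [htr1, htr2]
    _ ≤ (D.rank : ℝ) * opNorm D ^ 2 := hsum
    _ ≤ (2 * k) * (4 * opNorm (L - M) ^ 2) := by
        apply mul_le_mul hrankR h3 hDop
        positivity
    _ = 8 * (k : ℝ) * opNorm (L - M) ^ 2 := by ring

end
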